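/- arXiv:2602.12657 — 4 statements merged into one kernel-verified Lean document; each statement's English description precedes it below -/
import Mathlib

section
/- For all real numbers p ≥ 1, s > 0 and ε > 0, the following inequality holds: |√((s(p−1) + ε²)/(s + ε²)) − √(p−1)| ≤ ε·|p−2|·(s + ε²)^{−1/2}. -/
/-- Scalar estimate behind (4.7):
`|√((s(p-1)+ε²)/(s+ε²)) - √(p-1)| ≤ ε |p-2| (s+ε²)^{-1/2}`. -/
theorem stmt5 (p s ε : ℝ) (hp : 1 ≤ p) (hs : 0 < s) (hε : 0 < ε) :
    |Real.sqrt ((s * (p - 1) + ε ^ 2) / (s + ε ^ 2)) - Real.sqrt (p - 1)|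
      ≤ ε * |p - 2| * (s + ε ^ 2) ^ (-(1 / 2) : ℝ) := by
  have hd : (0:ℝ) < s + ε ^ 2 := by positivity
  set d := s + ε ^ 2 with hdef
  set x := (s * (p - 1) + ε ^ 2) / d with hxdef
  set y := p - 1 with hydef
  have hy : (0:ℝ) ≤ y := by simp [hydef]; linarith
  have hx : (0:ℝ) ≤ x := by
    apply div_nonneg _ hd.le
    nlinarith
  have hsd : 0 < Real.sqrt d := Real.sqrt_pos.mpr hd
  have hsd2 : Real.sqrt d * Real.sqrt d = d := Real.mul_self_sqrt hd.le
  -- lower bound on √x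
  have hxl : ε / Real.sqrt d ≤ Real.sqrt x := by
    have h1 : ε ^ 2 / d ≤ x := by
      rw [hxdef]
      gcongr
      nlinarith
    calc ε / Real.sqrt d = Real.sqrt (ε ^ 2) / Real.sqrt d := by
          rw [Real.sqrt_sq hε.le]
      _ = Real.sqrt (ε ^ 2 / d) := (Real.sqrt_div (by positivity) d).symm
      _ ≤ Real.sqrt x := Real.sqrt_le_sqrt h1
  have hsum : 0 < Real.sqrt x + Real.sqrt y := by
    have : 0 < ε / Real.sqrt d := by positivity
    nlinarith [Real.sqrt_nonneg y]
  have key : |Real.sqrt x - Real.sqrt y| * (Real.sqrt x + Real.sqrt y) = |x - y| := by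
    have h1 : (Real.sqrt x - Real.sqrt y) * (Real.sqrt x + Real.sqrt y) = x - y := by
      have := Real.sq_sqrt hx
      have := Real.sq_sqrt hy
      nlinarith
    calc |Real.sqrt x - Real.sqrt y| * (Real.sqrt x + Real.sqrt y)
        = |(Real.sqrt x - Real.sqrt y) * (Real.sqrt x + Real.sqrt y)| := by
          rw [abs_mul, abs_of_pos hsum]
      _ = |x - y| := by rw [h1]
  have hxy : |x - y| = ε ^ 2 * |p - 2| / d := by
    have h2 : x - y = ε ^ 2 * (2 - p) / d := by
      field_simp [hxdef, hydef]
      rw [hxdef, sub_mul, div_mul_cancel₀ _ hd.ne', hydef, hdef]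
      ring
    rw [h2, abs_div, abs_of_pos hd, abs_mul, abs_of_pos (by positivity : (0:ℝ) < ε ^ 2)]
    have : |2 - p| = |p - 2| := abs_sub_comm 2 p
    rw [this]
  -- main bound
  have main : |Real.sqrt x - Real.sqrt y| ≤ ε * |p - 2| / Real.sqrt d := by
    have h3 : |Real.sqrt x - Real.sqrt y| * (ε / Real.sqrt d)
        ≤ ε ^ 2 * |p - 2| / d := by
      calc |Real.sqrt x - Real.sqrt y| * (ε / Real.sqrt d)
          ≤ |Real.sqrt x - Real.sqrt y| * (Real.sqrt x + Real.sqrt y) := by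
            have hxl2 : ε / Real.sqrt d ≤ Real.sqrt x + Real.sqrt y := by
              nlinarith [Real.sqrt_nonneg y]
            exact mul_le_mul_of_nonneg_left hxl2 (abs_nonneg _)
        _ = |x - y| := key
        _ = ε ^ 2 * |p - 2| / d := hxy
    have h3' : |Real.sqrt x - Real.sqrt y| * ε * Real.sqrt d ≤ ε ^ 2 * |p - 2| := by
      have h5 := mul_le_mul_of_nonneg_right h3 hd.le
      have e1 : |Real.sqrt x - Real.sqrt y| * (ε / Real.sqrt d) * d
          = |Real.sqrt x - Real.sqrt y| * ε * Real.sqrt d := by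
        have hds : d / Real.sqrt d = Real.sqrt d := by
          rw [div_eq_iff hsd.ne']; exact hsd2.symm
        calc |Real.sqrt x - Real.sqrt y| * (ε / Real.sqrt d) * d
            = |Real.sqrt x - Real.sqrt y| * ε * (d / Real.sqrt d) := by ring
          _ = |Real.sqrt x - Real.sqrt y| * ε * Real.sqrt d := by rw [hds]
      have e2 : ε ^ 2 * |p - 2| / d * d = ε ^ 2 * |p - 2| :=
        div_mul_cancel₀ _ hd.ne'
      rw [e1, e2] at h5
      exact h5
    rw [le_div_iff₀ hsd]
    nlinarith [h3', hε]
  have hr : d ^ (-(1 / 2) : ℝ) = (Real.sqrt d)⁻¹ := by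
    rw [Real.rpow_neg hd.le, Real.sqrt_eq_rpow]
  rw [hr]
  simpa [div_eq_mul_inv] using main
end

section
/- Let p ≥ 1, ε > 0, ξ ∈ ℝⁿ with ξ ≠ 0, and P_ξ = (ξ⊗ξ)/|ξ|². Then, in the operator norm on n×n real matrices (induced by the Euclidean norm on ℝⁿ), ‖(I + (√((|ξ|²(p−1) + ε²)/(|ξ|² + ε²)) − 1)·P_ξ) − (I + (√(p−1) − 1)·P_ξ)‖ ≤ ε·|p−2|·(|ξ|² + ε²)^{−1/2}. -/
lemma sqrt_diff_aux {a b d M : ℝ} (hb : 0 ≤ b) (hd : 0 < d) (hda : d ^ 2 ≤ a)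
    (hab : |a - b| ≤ d * M) : |Real.sqrt a - Real.sqrt b| ≤ M := by
  have ha : 0 ≤ a := le_trans (by positivity) hda
  have hs : Real.sqrt a ^ 2 = a := Real.sq_sqrt ha
  have ht : Real.sqrt b ^ 2 = b := Real.sq_sqrt hb
  have hsd : d ≤ Real.sqrt a := by
    have := Real.sqrt_le_sqrt hda
    rwa [Real.sqrt_sq hd.le] at this
  have htn : 0 ≤ Real.sqrt b := Real.sqrt_nonneg b
  have expand : (Real.sqrt a - Real.sqrt b) * (Real.sqrt a + Real.sqrt b) = a - b := by
    linear_combination hs - ht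
  have key : |Real.sqrt a - Real.sqrt b| * (Real.sqrt a + Real.sqrt b) = |a - b| := by
    rw [← abs_of_nonneg (by positivity : (0:ℝ) ≤ Real.sqrt a + Real.sqrt b), ← abs_mul, expand]
  nlinarith [abs_nonneg (Real.sqrt a - Real.sqrt b)]

set_option maxHeartbeats 1000000 in
set_option synthInstance.maxHeartbeats 200000 in
/-- Matrix version of the regularization estimate (4.6)–(4.7): in the operator
norm induced by the Euclidean norm,
`‖Ã_ε(ξ)^{1/2} - Ã_0(ξ)^{1/2}‖ ≤ ε |p-2| (|ξ|²+ε²)^{-1/2}`. -/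
theorem stmt6 (n : ℕ) (p ε : ℝ) (hp : 1 ≤ p) (hε : 0 < ε)
    (ξ : Fin n → ℝ) (hξ : ξ ≠ 0) :
    let nsq : ℝ := ∑ i, (ξ i) ^ 2
    let P : Matrix (Fin n) (Fin n) ℝ := nsq⁻¹ • Matrix.vecMulVec ξ ξ
    let B₁ : Matrix (Fin n) (Fin n) ℝ :=
      1 + (Real.sqrt ((nsq * (p - 1) + ε ^ 2) / (nsq + ε ^ 2)) - 1) • P
    let B₀ : Matrix (Fin n) (Fin n) ℝ := 1 + (Real.sqrt (p - 1) - 1) • P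
    ‖Matrix.toEuclideanCLM (𝕜 := ℝ) B₁ - Matrix.toEuclideanCLM (𝕜 := ℝ) B₀‖
      ≤ ε * |p - 2| * (nsq + ε ^ 2) ^ (-(1 / 2) : ℝ) := by
  intro nsq P B₁ B₀
  have hnsq : 0 < nsq := by
    obtain ⟨i, hi⟩ := Function.ne_iff.mp hξ
    exact Finset.sum_pos' (fun j _ => sq_nonneg _)
      ⟨i, Finset.mem_univ i, pow_pos (abs_pos.mpr hi) 2 |>.trans_eq (sq_abs _)⟩
  have hNE : 0 < nsq + ε ^ 2 := by positivity
  have hS : Real.sqrt (nsq + ε ^ 2) ^ 2 = nsq + ε ^ 2 := Real.sq_sqrt hNE.le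
  have hsqrtNE : 0 < Real.sqrt (nsq + ε ^ 2) := Real.sqrt_pos.mpr hNE
  set c : ℝ := Real.sqrt ((nsq * (p - 1) + ε ^ 2) / (nsq + ε ^ 2)) - Real.sqrt (p - 1) with hc
  have hBB : B₁ - B₀ = c • P := by
    simp only [B₁, B₀, add_sub_add_left_eq_sub, ← sub_smul, hc]
    ring_nf
  -- norm of P as CLM is ≤ 1
  have hPnorm : ‖Matrix.toEuclideanCLM (𝕜 := ℝ) P‖ ≤ 1 := by
    apply ContinuousLinearMap.opNorm_le_bound _ zero_le_one
    intro v
    set w : Fin n → ℝ := WithLp.equiv 2 _ v with hw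
    set D : ℝ := ∑ j, ξ j * w j with hD
    have hPv : Matrix.toEuclideanCLM (𝕜 := ℝ) P v
        = (WithLp.equiv 2 _).symm (fun i => nsq⁻¹ * D * ξ i) := by
      apply (WithLp.equiv 2 _).injective
      rw [WithLp.equiv_apply, Matrix.ofLp_toEuclideanCLM]
      simp only [Equiv.apply_symm_apply]
      funext i
      show ∑ x, (nsq⁻¹ • Matrix.vecMulVec ξ ξ) i x * w x = nsq⁻¹ * D * ξ i
      simp only [Matrix.smul_apply, Matrix.vecMulVec_apply, smul_eq_mul, hD,
        Finset.mul_sum, Finset.sum_mul]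
      exact Finset.sum_congr rfl fun j _ => by ring
    rw [hPv]
    have hCS : D ^ 2 ≤ nsq * ∑ i, w i ^ 2 :=
      Finset.sum_mul_sq_le_sq_mul_sq Finset.univ ξ w
    have hnorm_eq : ‖(WithLp.equiv 2 ((i : Fin n) → ℝ)).symm (fun i => nsq⁻¹ * D * ξ i)‖
        = Real.sqrt (∑ i, (nsq⁻¹ * D * ξ i) ^ 2) := by
      simp only [EuclideanSpace.norm_eq, WithLp.equiv_symm_apply, PiLp.toLp_apply, Real.norm_eq_abs]
      congr 1
      exact Finset.sum_congr rfl fun i _ => sq_abs _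
    have hvnorm : ‖v‖ = Real.sqrt (∑ i, w i ^ 2) := by
      simp [EuclideanSpace.norm_eq, Real.norm_eq_abs, sq_abs, hw]
    clear_value D w
    rw [hnorm_eq, hvnorm, one_mul]
    apply Real.sqrt_le_sqrt
    have h1 : ∑ i, (nsq⁻¹ * D * ξ i) ^ 2 = (nsq⁻¹ * D) ^ 2 * ∑ i, ξ i ^ 2 := by
      rw [Finset.mul_sum]; exact Finset.sum_congr rfl fun i _ => by ring
    have h2 : (nsq⁻¹ * D) ^ 2 * (∑ i, ξ i ^ 2) = D ^ 2 * nsq⁻¹ := by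
      show (nsq⁻¹ * D) ^ 2 * nsq = D ^ 2 * nsq⁻¹
      field_simp
    rw [h1, h2]
    calc D ^ 2 * nsq⁻¹ ≤ (nsq * ∑ i, w i ^ 2) * nsq⁻¹ :=
          mul_le_mul_of_nonneg_right hCS (by positivity)
      _ = ∑ i, w i ^ 2 := by
          rw [mul_comm nsq, mul_assoc, mul_inv_cancel₀ hnsq.ne', mul_one]
  -- scalar bound
  have hrpow : (nsq + ε ^ 2) ^ (-(1 / 2) : ℝ) = (Real.sqrt (nsq + ε ^ 2))⁻¹ := by
    rw [Real.rpow_neg hNE.le, Real.sqrt_eq_rpow]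
  have hcbound : |c| ≤ ε * |p - 2| * (nsq + ε ^ 2) ^ (-(1 / 2) : ℝ) := by
    rw [hrpow, hc]
    apply sqrt_diff_aux (d := ε * (Real.sqrt (nsq + ε ^ 2))⁻¹) (by linarith) (by positivity)
    · rw [mul_pow, inv_pow, hS, ← div_eq_mul_inv]
      gcongr
      nlinarith [mul_nonneg hnsq.le (by linarith : (0:ℝ) ≤ p - 1)]
    · have hax : (nsq * (p - 1) + ε ^ 2) / (nsq + ε ^ 2) - (p - 1)
          = ε ^ 2 * (2 - p) / (nsq + ε ^ 2) := by
        field_simp; ring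
      have habs : |ε ^ 2 * (2 - p) / (nsq + ε ^ 2)| = ε ^ 2 * |p - 2| / (nsq + ε ^ 2) := by
        rw [abs_div, abs_of_pos hNE, abs_mul, abs_of_pos (by positivity : (0:ℝ) < ε ^ 2),
          abs_sub_comm]
      have hdM : ε * (Real.sqrt (nsq + ε ^ 2))⁻¹
            * (ε * |p - 2| * (Real.sqrt (nsq + ε ^ 2))⁻¹)
          = ε ^ 2 * |p - 2| / (nsq + ε ^ 2) := by
        rw [← hS, Real.sqrt_sq hsqrtNE.le]; field_simp
      rw [hax, habs, hdM]
  calc ‖Matrix.toEuclideanCLM (𝕜 := ℝ) B₁ - Matrix.toEuclideanCLM (𝕜 := ℝ) B₀‖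
      = ‖Matrix.toEuclideanCLM (𝕜 := ℝ) (c • P)‖ := by rw [← map_sub, hBB]
    _ = |c| * ‖Matrix.toEuclideanCLM (𝕜 := ℝ) P‖ := by
        rw [map_smul, norm_smul c (Matrix.toEuclideanCLM (𝕜 := ℝ) P), Real.norm_eq_abs]
    _ ≤ |c| * 1 := mul_le_mul_of_nonneg_left hPnorm (abs_nonneg c)
    _ ≤ _ := by rw [mul_one]; exact hcbound
end

section
/- Let 1 < q < 2 and let β satisfy −1/2 < β < q/2 − 1. Then there exist δ > 0 and c > 0 such that for every p ∈ (1, 2) with |p − q| ≤ δ and every s > 0: |s^{p/2−1} − s^{q/2−1}| ≤ c·|p − q|·(1 + s^β). -/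
private lemma exp_diff_le (x y : ℝ) :
    |Real.exp x - Real.exp y| ≤ |x - y| * Real.exp (max x y) := by
  wlog h : x ≤ y generalizing x y
  · rw [abs_sub_comm, abs_sub_comm x y, max_comm]
    exact this y x (le_of_not_ge h)
  rw [max_eq_right h, abs_of_nonpos (by simpa using Real.exp_le_exp.2 h),
    abs_of_nonpos (by linarith)]
  have h1 : (x - y) + 1 ≤ Real.exp (x - y) := Real.add_one_le_exp _
  have h2 : Real.exp (x - y) * Real.exp y = Real.exp x := by
    rw [← Real.exp_add]; ring_nf
  nlinarith [Real.exp_pos y]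

private lemma log_bound {ε t β : ℝ} (hε : 0 < ε) (h1 : β + ε ≤ t) (h2 : t ≤ -ε)
    {s : ℝ} (hs : 0 < s) : |Real.log s| * s ^ t ≤ ε⁻¹ * (1 + s ^ β) := by
  rcases le_or_gt 1 s with h | h
  · have hl : |Real.log s| = Real.log s := abs_of_nonneg (Real.log_nonneg h)
    have hlog : Real.log s ≤ s ^ ε / ε := Real.log_le_rpow_div hs.le hε
    have hst : s ^ t * s ^ ε = s ^ (t + ε) := (Real.rpow_add hs t ε).symm
    have h1' : s ^ (t + ε) ≤ 1 :=
      Real.rpow_le_one_of_one_le_of_nonpos h (by linarith)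
    have hb : (0:ℝ) ≤ s ^ β := (Real.rpow_pos_of_pos hs β).le
    have hpos : (0:ℝ) < s ^ t := Real.rpow_pos_of_pos hs t
    rw [hl]
    calc Real.log s * s ^ t ≤ s ^ ε / ε * s ^ t := by
          exact mul_le_mul_of_nonneg_right hlog hpos.le
      _ = s ^ (t + ε) / ε := by rw [div_mul_eq_mul_div, mul_comm, hst]
      _ ≤ 1 / ε := by gcongr
      _ ≤ ε⁻¹ * (1 + s ^ β) := by
          rw [one_div]
          nlinarith [inv_pos.2 hε]
  · have hlneg : Real.log s < 0 := Real.log_neg hs h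
    have hl : |Real.log s| = Real.log s⁻¹ := by
      rw [abs_of_neg hlneg, Real.log_inv]
    have hlog : Real.log s⁻¹ ≤ (s⁻¹) ^ ε / ε :=
      Real.log_le_rpow_div (inv_nonneg.2 hs.le) hε
    have hinv : (s⁻¹) ^ ε = s ^ (-ε) := by
      rw [Real.inv_rpow hs.le, ← Real.rpow_neg hs.le]
    have hst : s ^ (-ε) * s ^ t = s ^ (t - ε) := by
      rw [← Real.rpow_add hs]; ring_nf
    have h1' : s ^ (t - ε) ≤ s ^ β :=
      Real.rpow_le_rpow_of_exponent_ge hs h.le (by linarith)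
    have hpos : (0:ℝ) < s ^ t := Real.rpow_pos_of_pos hs t
    rw [hl]
    calc Real.log s⁻¹ * s ^ t ≤ s ^ (-ε) / ε * s ^ t := by
          apply mul_le_mul_of_nonneg_right _ hpos.le
          rwa [hinv] at hlog
      _ = s ^ (t - ε) / ε := by rw [div_mul_eq_mul_div, hst]
      _ ≤ s ^ β / ε := by gcongr
      _ ≤ ε⁻¹ * (1 + s ^ β) := by
          rw [div_eq_inv_mul]
          nlinarith [inv_pos.2 hε]

/-- Scalar core of estimate (4.1), fast diffusion case: for `1 < q < 2` and
`-1/2 < β < q/2 - 1` there are `δ, c > 0` such that for all `p ∈ (1,2)` with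
`|p - q| ≤ δ` and all `s > 0`,
`|s^{p/2-1} - s^{q/2-1}| ≤ c |p - q| (1 + s^β)`. -/
theorem stmt18 (q β : ℝ) (hq1 : 1 < q) (hq2 : q < 2) (hβ1 : -(1 / 2) < β)
    (hβ2 : β < q / 2 - 1) :
    ∃ δ > 0, ∃ c > 0, ∀ p : ℝ, 1 < p → p < 2 → |p - q| ≤ δ →
      ∀ s : ℝ, 0 < s →
        |s ^ (p / 2 - 1) - s ^ (q / 2 - 1)| ≤ c * |p - q| * (1 + s ^ β) := by
  set b := q / 2 - 1 with hb
  have hbneg : b < 0 := by simp [hb]; linarith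
  have hβb : β < b := hβ2
  set ε := min (b - β) (-b) / 2 with hεdef
  have hε : 0 < ε := by
    apply div_pos _ two_pos
    exact lt_min (by linarith) (by linarith)
  have hε1 : ε ≤ (b - β) / 2 := by
    rw [hεdef]; exact div_le_div_of_nonneg_right (min_le_left _ _) (by norm_num)
  have hε2 : ε ≤ (-b) / 2 := by
    rw [hεdef]; exact div_le_div_of_nonneg_right (min_le_right _ _) (by norm_num)
  refine ⟨ε, hε, ε⁻¹, inv_pos.2 hε, fun p hp1 hp2 hpq s hs => ?_⟩
  set a := p / 2 - 1 with ha
  have hab : |a - b| ≤ ε / 2 := by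
    have : a - b = (p - q) / 2 := by rw [ha, hb]; ring
    rw [this, abs_div]
    rw [abs_of_pos (by norm_num : (0:ℝ) < 2)]
    linarith [hpq]
  have hab_eq : |a - b| = |p - q| / 2 := by
    have : a - b = (p - q) / 2 := by rw [ha, hb]; ring
    rw [this, abs_div, abs_of_pos (by norm_num : (0:ℝ) < 2)]
  have hrange : ∀ t : ℝ, |t - b| ≤ ε / 2 → β + ε ≤ t ∧ t ≤ -ε := by
    intro t ht
    have h1 := abs_le.1 ht
    constructor <;> [nlinarith [h1.1]; nlinarith [h1.2]]
  have hta := hrange a hab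
  have htb := hrange b (by simpa using (by positivity : (0:ℝ) ≤ ε / 2))
  set L := Real.log s with hL
  have hsa : s ^ a = Real.exp (a * L) := by
    rw [Real.rpow_def_of_pos hs, ← hL]; ring_nf
  have hsb : s ^ b = Real.exp (b * L) := by
    rw [Real.rpow_def_of_pos hs, ← hL]; ring_nf
  rw [hsa, hsb]
  calc |Real.exp (a * L) - Real.exp (b * L)|
      ≤ |a * L - b * L| * Real.exp (max (a * L) (b * L)) := exp_diff_le _ _
    _ = |a - b| * (|L| * Real.exp (max (a * L) (b * L))) := by
        rw [← sub_mul, abs_mul]; ring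
    _ ≤ (|p - q| / 2) * (ε⁻¹ * (1 + s ^ β)) := by
        apply mul_le_mul hab_eq.le _ (by positivity) (by positivity)
        rcases max_cases (a * L) (b * L) with ⟨hm, _⟩ | ⟨hm, _⟩
        · rw [hm, ← hsa]
          exact log_bound hε hta.1 hta.2 hs
        · rw [hm, ← hsb]
          exact log_bound hε htb.1 htb.2 hs
    _ ≤ ε⁻¹ * |p - q| * (1 + s ^ β) := by
        have h1 : (0:ℝ) ≤ 1 + s ^ β := by positivity
        have h2 : (0:ℝ) ≤ |p - q| := abs_nonneg _
        have h3 : (0:ℝ) < ε⁻¹ := inv_pos.2 hε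
        nlinarith [mul_nonneg (mul_nonneg h3.le h2) h1]
end

section
/- Let q > 2 and let β satisfy β > q/2 − 1. Then there exist δ > 0 and c > 0 such that for every p > 2 with |p − q| ≤ δ and every s > 0: |s^{p/2−1} − s^{q/2−1}| ≤ c·|p − q|·(1 + s^β). -/
lemma aux_exp (y : ℝ) : |Real.exp y - 1| ≤ |y| * Real.exp |y| := by
  rcases le_or_gt 0 y with hy | hy
  · rw [abs_of_nonneg hy, abs_of_nonneg (by linarith [Real.add_one_le_exp y] : (0:ℝ) ≤ Real.exp y - 1)]
    have h1 := Real.add_one_le_exp (-y)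
    rw [Real.exp_neg] at h1
    have h2 := Real.exp_pos y
    have h3 : (-y + 1) * Real.exp y ≤ (Real.exp y)⁻¹ * Real.exp y :=
      mul_le_mul_of_nonneg_right h1 h2.le
    rw [inv_mul_cancel₀ h2.ne'] at h3
    nlinarith
  · rw [abs_of_neg hy, abs_of_nonpos (by linarith [Real.exp_lt_one_iff.mpr hy] : Real.exp y - 1 ≤ 0)]
    have h1 := Real.add_one_le_exp y
    have h2 := Real.one_le_exp (le_of_lt (neg_pos.mpr hy))
    nlinarith

lemma aux_log (x ε : ℝ) (hx : 1 ≤ x) (hε : 0 < ε) : Real.log x ≤ x ^ ε / ε := by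
  have h0 : (0:ℝ) < x := by linarith
  have h1 : Real.log (x ^ ε) ≤ x ^ ε - 1 := Real.log_le_sub_one_of_pos (Real.rpow_pos_of_pos h0 ε)
  rw [Real.log_rpow h0] at h1
  rw [le_div_iff₀ hε]
  linarith

lemma aux_main (b β h s : ℝ) (hb0 : 0 < b) (hβb : b < β)
    (hh1 : |h| ≤ b / 2) (hh2 : |h| ≤ (β - b) / 2) (hs : 0 < s) :
    |s ^ (b + h) - s ^ b| ≤ (4 / b + 2 / (β - b)) * (2 * |h|) * (1 + s ^ β) := by
  have hβb0 : (0:ℝ) < β - b := by linarith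
  have hH : (0:ℝ) ≤ |h| := abs_nonneg h
  have hsβ : (0:ℝ) ≤ s ^ β := Real.rpow_nonneg hs.le β
  have hsb : (0:ℝ) < s ^ b := Real.rpow_pos_of_pos hs b
  set L := Real.log s with hLdef
  have key : |s ^ (b + h) - s ^ b| ≤ s ^ b * (|h| * |L| * Real.exp (|h| * |L|)) := by
    have e1 : s ^ (b + h) = s ^ b * Real.exp (h * L) := by
      rw [Real.rpow_add hs, Real.rpow_def_of_pos hs h, mul_comm L h]
    calc |s ^ (b + h) - s ^ b| = s ^ b * |Real.exp (h * L) - 1| := by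
          rw [e1, ← mul_sub_one, abs_mul, abs_of_nonneg hsb.le]
      _ ≤ s ^ b * (|h * L| * Real.exp |h * L|) :=
          mul_le_mul_of_nonneg_left (aux_exp _) hsb.le
      _ = s ^ b * (|h| * |L| * Real.exp (|h| * |L|)) := by rw [abs_mul]
  rcases le_or_gt 1 s with hs1 | hs1
  · -- s ≥ 1
    have hL : |L| = L := abs_of_nonneg (Real.log_nonneg hs1)
    have hexp : Real.exp (|h| * L) = s ^ |h| := by
      rw [Real.rpow_def_of_pos hs, mul_comm]
    have hη : (0:ℝ) < (β - b) / 2 := by linarith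
    have hlog : L ≤ s ^ ((β - b) / 2) / ((β - b) / 2) := aux_log s _ hs1 hη
    have hcomb : s ^ b * s ^ |h| * s ^ ((β - b) / 2) ≤ s ^ β := by
      rw [← Real.rpow_add hs, ← Real.rpow_add hs]
      exact Real.rpow_le_rpow_of_exponent_le hs1 (by linarith)
    have step : s ^ b * (|h| * |L| * Real.exp (|h| * |L|)) ≤ 2 / (β - b) * |h| * s ^ β := by
      rw [hL, hexp]
      have e2 : s ^ b * (|h| * L * s ^ |h|) = |h| * (s ^ b * s ^ |h| * L) := by ring
      rw [e2]
      have hL0 : 0 ≤ L := Real.log_nonneg hs1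
      have e3 : |h| * (s ^ b * s ^ |h| * L)
          ≤ |h| * (s ^ b * s ^ |h| * (s ^ ((β - b) / 2) / ((β - b) / 2))) := by
        have := mul_le_mul_of_nonneg_left hlog (by positivity : (0:ℝ) ≤ s ^ b * s ^ |h|)
        nlinarith
      refine e3.trans ?_
      have e4 : |h| * (s ^ b * s ^ |h| * (s ^ ((β - b) / 2) / ((β - b) / 2)))
          = 2 / (β - b) * |h| * (s ^ b * s ^ |h| * s ^ ((β - b) / 2)) := by
        field_simp
      rw [e4]
      have := mul_le_mul_of_nonneg_left hcomb (by positivity : (0:ℝ) ≤ 2 / (β - b) * |h|)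
      linarith
    refine (key.trans step).trans ?_
    have h4b : (0:ℝ) < 4 / b := by positivity
    have h2β : (0:ℝ) < 2 / (β - b) := by positivity
    nlinarith [mul_nonneg (mul_nonneg h2β.le hH) hsβ, mul_nonneg (mul_nonneg h4b.le hH) hsβ,
      mul_nonneg h4b.le hH, mul_nonneg h2β.le hH]
  · -- s < 1
    have hL : |L| = -L := abs_of_nonpos (Real.log_nonpos hs.le hs1.le)
    have hexp : Real.exp (|h| * |L|) = s ^ (-|h|) := by
      rw [hL, Real.rpow_def_of_pos hs]
      congr 1; ring
    have hinv : 1 ≤ s⁻¹ := by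
      rw [le_inv_comm₀ one_pos hs]; simpa using hs1.le
    have hε : (0:ℝ) < b / 4 := by linarith
    have hloginv : -L ≤ s ^ (-(b / 4)) / (b / 4) := by
      have h1 : Real.log s⁻¹ ≤ (s⁻¹) ^ (b / 4) / (b / 4) := aux_log s⁻¹ _ hinv hε
      rw [Real.log_inv] at h1
      rwa [Real.inv_rpow hs.le, ← Real.rpow_neg hs.le] at h1
    have step : s ^ b * (|h| * |L| * Real.exp (|h| * |L|)) ≤ 4 / b * |h| := by
      rw [hL] at hexp ⊢
      rw [hexp]
      have hprod : s ^ b * s ^ (-(b / 4)) * s ^ (-|h|) ≤ 1 := by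
        rw [← Real.rpow_add hs, ← Real.rpow_add hs]
        exact Real.rpow_le_one hs.le hs1.le (by linarith)
      have hnegL : 0 ≤ -L := neg_nonneg.mpr (Real.log_nonpos hs.le hs1.le)
      have hpos : (0:ℝ) ≤ s ^ b * s ^ (-|h|) := by positivity
      calc s ^ b * (|h| * -L * s ^ (-|h|)) = |h| * -L * (s ^ b * s ^ (-|h|)) := by ring
        _ ≤ |h| * (s ^ (-(b / 4)) / (b / 4)) * (s ^ b * s ^ (-|h|)) :=
            mul_le_mul_of_nonneg_right (mul_le_mul_of_nonneg_left hloginv hH) hpos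
        _ = 4 / b * |h| * (s ^ b * s ^ (-(b / 4)) * s ^ (-|h|)) := by field_simp
        _ ≤ 4 / b * |h| * 1 :=
            mul_le_mul_of_nonneg_left hprod (by positivity)
        _ = 4 / b * |h| := mul_one _
    refine (key.trans step).trans ?_
    have h4b : (0:ℝ) < 4 / b := by positivity
    have h2β : (0:ℝ) < 2 / (β - b) := by positivity
    nlinarith [mul_nonneg (mul_nonneg h2β.le hH) hsβ, mul_nonneg (mul_nonneg h4b.le hH) hsβ,
      mul_nonneg h4b.le hH, mul_nonneg h2β.le hH]



/-- Scalar core of estimate (4.1), slow diffusion case: for `q > 2` and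
`β > q/2 - 1` there are `δ, c > 0` such that for all `p > 2` with `|p - q| ≤ δ`
and all `s > 0`, `|s^{p/2-1} - s^{q/2-1}| ≤ c |p - q| (1 + s^β)`. -/
theorem stmt19 (q β : ℝ) (hq : 2 < q) (hβ : q / 2 - 1 < β) :
    ∃ δ > 0, ∃ c > 0, ∀ p : ℝ, 2 < p → |p - q| ≤ δ →
      ∀ s : ℝ, 0 < s →
        |s ^ (p / 2 - 1) - s ^ (q / 2 - 1)| ≤ c * |p - q| * (1 + s ^ β) := by
  have hb0 : 0 < q / 2 - 1 := by linarith
  have hβb : 0 < β - (q / 2 - 1) := by linarith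
  refine ⟨min (q / 2 - 1) (β - (q / 2 - 1)), lt_min hb0 hβb,
    4 / (q / 2 - 1) + 2 / (β - (q / 2 - 1)), by positivity, ?_⟩
  intro p hp hpq s hs
  have habs : |p - q| = 2 * |(p - q) / 2| := by
    rw [abs_div, abs_two]; ring
  have hh1 : |(p - q) / 2| ≤ (q / 2 - 1) / 2 := by
    have := hpq.trans (min_le_left _ _); rw [habs] at this; linarith
  have hh2 : |(p - q) / 2| ≤ (β - (q / 2 - 1)) / 2 := by
    have := hpq.trans (min_le_right _ _); rw [habs] at this; linarith
  have key := aux_main (q / 2 - 1) β ((p - q) / 2) s hb0 (by linarith) hh1 hh2 hs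
  rw [show q / 2 - 1 + (p - q) / 2 = p / 2 - 1 by ring] at key
  rw [habs]
  exact key
end
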